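/- arXiv:1407.5708 — 3 statements merged into one kernel-verified Lean document; each statement's English description precedes it below -/
import Mathlib

section
/- Let W be the ring of Witt vectors of an algebraically closed field k of odd characteristic p, let L be a finite free W-module, and let ψ : L → L be a W-linear automorphism of finite order coprime to p. If v ∈ L ⊗ k is an eigenvector of the induced map ψ ⊗ k on L ⊗ k, then there exists an eigenvector v̂ ∈ L of ψ whose reduction modulo p equals v. -/
open WittVector Finset

/-- In the Witt vectors of a perfect field, a vector with vanishing zeroth
coefficient is divisible by `p`. -/
lemma witt_p_dvd_of_coeff_zero {p : ℕ} [Fact p.Prime] {k : Type*} [Field k]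
    [CharP k p] [PerfectRing k p] (w : WittVector p k) (h : w.coeff 0 = 0) :
    (p : WittVector p k) ∣ w := by
  by_cases hw : w = 0
  · simp [hw]
  obtain ⟨m, c, hc, rfl⟩ := WittVector.verschiebung_nonzero hw
  cases m with
  | zero => simp only [Function.iterate_zero, id_eq] at h; exact absurd h hc
  | succ m =>
    set y := (verschiebung)^[m] c with hy
    have hiter : (verschiebung)^[m + 1] c = verschiebung y := by
      rw [Function.iterate_succ_apply']
    rw [hiter]
    refine ⟨(frobeniusEquiv p k).symm y, ?_⟩
    have h3 : frobenius ((frobeniusEquiv p k).symm y) = y := by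
      have := (frobeniusEquiv p k).apply_symm_apply y
      rwa [WittVector.frobeniusEquiv_apply] at this
    have h2 := WittVector.verschiebung_frobenius ((frobeniusEquiv p k).symm y)
    rw [h3] at h2
    exact h2.trans (mul_comm _ _)

/-- Membership in the ideal `(p)` of the Witt vectors is detected by the zeroth
coefficient. -/
lemma witt_mem_span_p_iff {p : ℕ} [Fact p.Prime] {k : Type*} [Field k]
    [CharP k p] [PerfectRing k p] (c : WittVector p k) :
    c ∈ Ideal.span {(p : WittVector p k)} ↔ WittVector.constantCoeff c = 0 := by
  rw [Ideal.mem_span_singleton]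
  constructor
  · rintro ⟨d, rfl⟩
    have := WittVector.mul_charP_coeff_zero d (p := p)
    rw [WittVector.constantCoeff_apply, mul_comm]
    exact this
  · intro h
    exact witt_p_dvd_of_coeff_zero c h

/-- Let `W = W(k)` be the Witt vectors of an algebraically closed field `k` of odd
characteristic `p`, `L` a finite free `W`-module and `ψ` a `W`-linear automorphism of
finite order coprime to `p`.  Every eigenvector `v` of the induced automorphism
`ψ ⊗ k` of `L ⊗ k = L/pL` lifts to an eigenvector `vhat ∈ L` of `ψ` reducing to `v`. -/
theorem stmt3 (p : ℕ) [Fact p.Prime] (hodd : Odd p)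
    (k : Type*) [Field k] [IsAlgClosed k] [CharP k p]
    (L : Type*) [AddCommGroup L] [Module (WittVector p k) L]
    [Module.Finite (WittVector p k) L] [Module.Free (WittVector p k) L]
    (ψ : L ≃ₗ[WittVector p k] L) (N : ℕ) (hN : 0 < N) (hpN : ¬ p ∣ N)
    (hord : ψ ^ N = 1)
    -- the submodule `pL`, so that `L ⊗ k = L / pL`
    (pL : Submodule (WittVector p k) L)
    (hpL : pL = (Ideal.span {(p : WittVector p k)}) • (⊤ : Submodule (WittVector p k) L))
    -- `v` is a nonzero eigenvector of `ψ ⊗ k` : for every lift `x` of `v`,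
    -- `ψ x` reduces to `μ • v`
    (v : L ⧸ pL) (hv : v ≠ 0) (μ : WittVector p k)
    (heig : ∀ x : L, pL.mkQ x = v → pL.mkQ (ψ x) = μ • v) :
    ∃ vhat : L, (∃ c : WittVector p k, ψ vhat = c • vhat) ∧ vhat ≠ 0 ∧ pL.mkQ vhat = v := by
  classical
  -- scalars in `(p)` kill the quotient
  have hsmulzero : ∀ c : WittVector p k, c ∈ Ideal.span {(p : WittVector p k)} →
      ∀ y : L ⧸ pL, c • y = 0 := by
    intro c hc y
    obtain ⟨x, rfl⟩ := pL.mkQ_surjective y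
    rw [← map_smul]
    rw [Submodule.mkQ_apply, Submodule.Quotient.mk_eq_zero]
    rw [hpL]
    exact Submodule.smul_mem_smul hc trivial
  -- conversely, a scalar killing the nonzero `v` lies in `(p)`
  have hkill : ∀ c : WittVector p k, c • v = 0 →
      c ∈ Ideal.span {(p : WittVector p k)} := by
    intro c hc
    by_contra h
    rw [witt_mem_span_p_iff] at h
    have hu : IsUnit c :=
      WittVector.isUnit_of_coeff_zero_ne_zero c (by
        rwa [← WittVector.constantCoeff_apply])
    obtain ⟨u, rfl⟩ := hu
    apply hv
    have h2 : u • v = 0 := by rw [Units.smul_def]; exact hc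
    calc v = u⁻¹ • (u • v) := (inv_smul_smul u v).symm
    _ = 0 := by rw [h2, smul_zero]
  -- ψ preserves pL, hence descends to the quotient
  have hcomap : pL ≤ pL.comap (ψ : L →ₗ[WittVector p k] L) := by
    conv_lhs => rw [hpL]
    intro y hy
    have hmem : (ψ : L →ₗ[WittVector p k] L) y ∈
        Submodule.map (ψ : L →ₗ[WittVector p k] L)
          (Ideal.span {(p : WittVector p k)} • ⊤) :=
      Submodule.mem_map_of_mem hy
    rw [Submodule.map_smul''] at hmem
    have hle : Ideal.span {(p : WittVector p k)} •
        Submodule.map (ψ : L →ₗ[WittVector p k] L) ⊤ ≤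
        Ideal.span {(p : WittVector p k)} • (⊤ : Submodule (WittVector p k) L) :=
      smul_mono_right _ le_top
    have : (ψ : L →ₗ[WittVector p k] L) y ∈
        Ideal.span {(p : WittVector p k)} • (⊤ : Submodule (WittVector p k) L) :=
      hle hmem
    rw [Submodule.mem_comap, hpL]
    exact this
  set ψbar : L ⧸ pL →ₗ[WittVector p k] L ⧸ pL :=
    Submodule.mapQ pL pL (ψ : L →ₗ[WittVector p k] L) hcomap with hψbar_def
  have hψbar : ∀ y : L, pL.mkQ (ψ y) = ψbar (pL.mkQ y) := by
    intro y
    rw [hψbar_def, Submodule.mkQ_apply, Submodule.mkQ_apply, Submodule.mapQ_apply]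
    rfl
  -- the eigen equation on the quotient
  have hveig : ψbar v = μ • v := by
    obtain ⟨x0, hx0⟩ := pL.mkQ_surjective v
    rw [← hx0, ← hψbar]
    rw [heig x0 hx0, hx0]
  -- fix a lift x of v
  obtain ⟨x, hx⟩ := pL.mkQ_surjective v
  -- iterates
  have claim1 : ∀ i : ℕ, pL.mkQ ((ψ ^ i) x) = μ ^ i • v := by
    intro i
    induction i with
    | zero => simpa using hx
    | succ n ih =>
      have hps : (ψ ^ (n + 1)) x = ψ ((ψ ^ n) x) := by
        rw [pow_succ']; rfl
      rw [hps, hψbar, ih, map_smul, hveig, pow_succ', mul_smul]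
      exact smul_comm _ _ _
  -- μ̄^N = 1
  have hμNv : (μ ^ N - 1) • v = 0 := by
    have h1 : pL.mkQ ((ψ ^ N) x) = μ ^ N • v := claim1 N
    rw [hord] at h1
    have h2 : (1 : L ≃ₗ[WittVector p k] L) x = x := rfl
    rw [h2, hx] at h1
    rw [sub_smul, one_smul, ← h1, sub_self]
  have hμN : (WittVector.constantCoeff μ) ^ N = 1 := by
    have := hkill _ hμNv
    rw [witt_mem_span_p_iff, map_sub, map_pow, map_one, sub_eq_zero] at this
    exact this
  -- the Teichmüller eigenvalue
  set lam : WittVector p k := WittVector.teichmuller p (WittVector.constantCoeff μ)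
    with hlam_def
  have hlamN : lam ^ N = 1 := by
    rw [hlam_def, ← map_pow, hμN, map_one]
  have hmul1 : lam * lam ^ (N - 1) = 1 := by
    rw [← pow_succ', Nat.sub_add_cancel hN, hlamN]
  have hlam_unit : IsUnit lam := IsUnit.of_mul_eq_one _ hmul1
  set lu : (WittVector p k)ˣ := hlam_unit.unit with hlu_def
  have hlu : (lu : WittVector p k) = lam := hlam_unit.unit_spec
  have hluN : lu ^ N = 1 := by
    apply Units.ext
    rw [Units.val_pow_eq_pow_val, hlu, hlamN, Units.val_one]
  -- lam acts like μ on v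
  have hlamv : lam • v = μ • v := by
    have hmem : lam - μ ∈ Ideal.span {(p : WittVector p k)} := by
      rw [witt_mem_span_p_iff, map_sub, hlam_def, WittVector.constantCoeff_apply,
        WittVector.teichmuller_coeff_zero, WittVector.constantCoeff_apply, sub_self]
    have := hsmulzero _ hmem v
    rw [sub_smul] at this
    exact sub_eq_zero.mp this
  have hpowv : ∀ i : ℕ, lam ^ i • v = μ ^ i • v := by
    intro i
    induction i with
    | zero => simp
    | succ n ih =>
      rw [pow_succ, pow_succ, mul_smul, mul_smul, hlamv, smul_comm, ih, smul_comm]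
  have hinvpow : ∀ i : ℕ, ((lu⁻¹ : (WittVector p k)ˣ) : WittVector p k) ^ i •
      μ ^ i • v = v := by
    intro i
    rw [← hpowv i, smul_smul, ← hlu, ← mul_pow, Units.inv_mul, one_pow, one_smul]
  -- the averaged sum
  set f : ℕ → L := fun i => ((lu⁻¹ : (WittVector p k)ˣ) : WittVector p k) ^ i •
    ((ψ ^ i) x) with hf_def
  set s : L := ∑ i ∈ Finset.range N, f i with hs_def
  have hfN : f N = f 0 := by
    have h1 : ((lu⁻¹ : (WittVector p k)ˣ) : WittVector p k) ^ N = 1 := by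
      rw [← Units.val_pow_eq_pow_val, inv_pow, hluN, inv_one, Units.val_one]
    have h2 : (ψ ^ N) x = x := by rw [hord]; rfl
    simp [hf_def, h1, h2]
  have hshift : ∑ i ∈ Finset.range N, f (i + 1) = s := by
    have h1 := Finset.sum_range_succ' f N
    have h2 := Finset.sum_range_succ f N
    rw [h2, hfN] at h1
    exact (add_right_cancel h1).symm
  have hψf : ∀ i : ℕ, ψ (f i) = lam • f (i + 1) := by
    intro i
    have hunit : lu * (lu⁻¹) ^ (i + 1) = (lu⁻¹) ^ i := by
      rw [pow_succ', mul_inv_cancel_left]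
    have hcast : lam * ((lu⁻¹ : (WittVector p k)ˣ) : WittVector p k) ^ (i + 1) =
        ((lu⁻¹ : (WittVector p k)ˣ) : WittVector p k) ^ i := by
      rw [← hlu, ← Units.val_pow_eq_pow_val, ← Units.val_mul, hunit,
        Units.val_pow_eq_pow_val]
    have hps : (ψ ^ (i + 1)) x = ψ ((ψ ^ i) x) := by rw [pow_succ']; rfl
    rw [hf_def]
    simp only [map_smul, hps, smul_smul, hcast]
  have hψs : ψ s = lam • s := by
    rw [hs_def, map_sum]
    calc ∑ i ∈ Finset.range N, ψ (f i)
        = ∑ i ∈ Finset.range N, lam • f (i + 1) := by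
          exact Finset.sum_congr rfl fun i _ => hψf i
      _ = lam • ∑ i ∈ Finset.range N, f (i + 1) := by rw [Finset.smul_sum]
      _ = lam • ∑ i ∈ Finset.range N, f i := by rw [hshift]
  -- reduction of s
  have hmkQs : pL.mkQ s = (N : WittVector p k) • v := by
    rw [hs_def, map_sum]
    have : ∀ i ∈ Finset.range N, pL.mkQ (f i) = v := by
      intro i _
      rw [hf_def]
      simp only [map_smul, claim1 i]
      exact hinvpow i
    rw [Finset.sum_congr rfl this, Finset.sum_const, Finset.card_range,
      ← Nat.cast_smul_eq_nsmul (WittVector p k)]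
  -- N is a unit
  have hNunit : IsUnit ((N : ℕ) : WittVector p k) := by
    apply WittVector.isUnit_of_coeff_zero_ne_zero
    rw [← WittVector.constantCoeff_apply, map_natCast]
    intro h
    exact hpN ((CharP.cast_eq_zero_iff k p N).mp h)
  set Nu : (WittVector p k)ˣ := hNunit.unit with hNu_def
  have hNu : (Nu : WittVector p k) = ((N : ℕ) : WittVector p k) := hNunit.unit_spec
  -- the eigenvector
  refine ⟨((Nu⁻¹ : (WittVector p k)ˣ) : WittVector p k) • s, ⟨lam, ?_⟩, ?_, ?_⟩
  · rw [map_smul, hψs, smul_comm]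
  · intro h0
    apply hv
    have : pL.mkQ (((Nu⁻¹ : (WittVector p k)ˣ) : WittVector p k) • s) = v := by
      rw [map_smul, hmkQs, smul_smul, ← hNu, Units.inv_mul, one_smul]
    rw [h0, map_zero] at this
    exact this.symm
  · rw [map_smul, hmkQs, smul_smul, ← hNu, Units.inv_mul, one_smul]
end

section
/- Let W be the ring of Witt vectors of an algebraically closed field k of odd characteristic p, L a finite free W-module, and ψ : L → L a W-linear automorphism of finite order coprime to p. If ℓ ⊆ L ⊗ k is a one-dimensional k-subspace stable under ψ ⊗ k, then there exists a rank one W-submodule M ⊆ L which is a direct summand of L, stable under ψ, and whose reduction M ⊗ k equals ℓ. -/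
private lemma unit_smul_cancel {R M : Type*} [Ring R] [AddCommGroup M] [Module R M]
    (u : Rˣ) (x : M) (h : (u : R) • x = 0) : x = 0 := by
  have := congrArg (fun z => ((u⁻¹ : Rˣ) : R) • z) h
  simpa [smul_smul] using this

/-- Let `W = W(k)` with `k` algebraically closed of odd characteristic `p`, `L` a finite
free `W`-module and `ψ` an automorphism of `L` of finite order coprime to `p`.  Every
line `ℓ ⊆ L/pL` stable under `ψ mod p` lifts to a `ψ`-stable rank one direct summand
`M ⊆ L` (i.e. `M` free of rank one with `L/M` free) whose reduction equals `ℓ`. -/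
theorem stmt4 (p : ℕ) [Fact p.Prime] (hodd : Odd p)
    (k : Type*) [Field k] [IsAlgClosed k] [CharP k p]
    (L : Type*) [AddCommGroup L] [Module (WittVector p k) L]
    [Module.Finite (WittVector p k) L] [Module.Free (WittVector p k) L]
    (ψ : L ≃ₗ[WittVector p k] L) (N : ℕ) (hN : 0 < N) (hpN : ¬ p ∣ N)
    (hord : ψ ^ N = 1)
    (pL : Submodule (WittVector p k) L)
    (hpL : pL = (Ideal.span {(p : WittVector p k)}) • (⊤ : Submodule (WittVector p k) L))
    -- `ℓ` is a line in `L/pL`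
    (ℓ : Submodule (WittVector p k) (L ⧸ pL))
    (hline : ∃ v : L ⧸ pL, v ≠ 0 ∧ ℓ = Submodule.span (WittVector p k) {v})
    -- `ℓ` is stable under `ψ ⊗ k`
    (hstab : ∀ x : L, pL.mkQ x ∈ ℓ ↔ pL.mkQ (ψ x) ∈ ℓ) :
    ∃ M : Submodule (WittVector p k) L,
      Module.Free (WittVector p k) M ∧ Module.rank (WittVector p k) M = 1 ∧
      Module.Free (WittVector p k) (L ⧸ M) ∧
      Submodule.map (ψ : L →ₗ[WittVector p k] L) M = M ∧
      Submodule.map pL.mkQ M = ℓ := by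
  classical
  letI : IsDiscreteValuationRing (WittVector p k) := WittVector.isDiscreteValuationRing
  have hp0 : (p : WittVector p k) ≠ 0 := WittVector.p_nonzero p k
  obtain ⟨M0, rfl⟩ : ∃ M0, N = M0 + 1 := ⟨N - 1, (Nat.succ_pred_eq_of_pos hN).symm⟩
  -- membership lemma for pL
  have hmem_pL : ∀ (s : WittVector p k) (z : L), (p : WittVector p k) ∣ s → s • z ∈ pL := by
    rintro s z ⟨t, rfl⟩
    rw [hpL, mul_smul]
    exact Submodule.smul_mem_smul (Ideal.mem_span_singleton_self _)
      (Submodule.mem_top : t • z ∈ (⊤ : Submodule (WittVector p k) L))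
  -- ψ stabilizes pL
  have hψpL : ∀ x ∈ pL, ψ x ∈ pL := by
    have hmap : Submodule.map (ψ : L →ₗ[WittVector p k] L) pL = pL := by
      rw [hpL, Submodule.map_smul'', Submodule.map_top, LinearEquiv.range]
    intro x hx
    rw [← hmap]
    exact Submodule.mem_map_of_mem hx
  obtain ⟨vbar, hvbar, hℓ⟩ := hline
  obtain ⟨v₀, hv₀⟩ := pL.mkQ_surjective vbar
  have hv₀mem : pL.mkQ v₀ ∈ ℓ := by
    rw [hv₀, hℓ]; exact Submodule.mem_span_singleton_self _
  obtain ⟨c, hc⟩ : ∃ c : WittVector p k, c • vbar = pL.mkQ (ψ v₀) := by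
    have := (hstab v₀).mp hv₀mem
    rw [hℓ] at this
    exact Submodule.mem_span_singleton.mp this
  -- iteration
  have hiter : ∀ i : ℕ, pL.mkQ (ψ^[i] v₀) = c ^ i • vbar := by
    intro i
    induction i with
    | zero => simpa using hv₀
    | succ i ih =>
      have h1 : ψ^[i] v₀ - c ^ i • v₀ ∈ pL := by
        rw [← Submodule.Quotient.mk_eq_zero pL]
        have : pL.mkQ (ψ^[i] v₀ - c ^ i • v₀) = 0 := by
          rw [map_sub, map_smul, ih, hv₀, sub_self]
        simpa using this
      have h2 : ψ (ψ^[i] v₀) - c ^ i • ψ v₀ ∈ pL := by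
        have := hψpL _ h1
        rwa [map_sub, map_smul] at this
      have h3 : ψ v₀ - c • v₀ ∈ pL := by
        rw [← Submodule.Quotient.mk_eq_zero pL]
        have : pL.mkQ (ψ v₀ - c • v₀) = 0 := by
          rw [map_sub, map_smul, ← hc, hv₀, sub_self]
        simpa using this
      have h4 : ψ (ψ^[i] v₀) - c ^ (i + 1) • v₀ ∈ pL := by
        have := pL.add_mem h2 (pL.smul_mem (c ^ i) h3)
        have heq : ψ (ψ^[i] v₀) - c ^ i • ψ v₀ + c ^ i • (ψ v₀ - c • v₀)
            = ψ (ψ^[i] v₀) - c ^ (i + 1) • v₀ := by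
          rw [smul_sub, smul_smul, ← pow_succ]
          abel
        rwa [heq] at this
      have : pL.mkQ (ψ (ψ^[i] v₀) - c ^ (i + 1) • v₀) = 0 := by
        rw [Submodule.mkQ_apply, Submodule.Quotient.mk_eq_zero]; exact h4
      rw [map_sub, map_smul, sub_eq_zero] at this
      rw [Function.iterate_succ_apply', this, hv₀]
  have hordv : ψ^[M0 + 1] v₀ = v₀ := by
    have := congrArg (fun e : L ≃ₗ[WittVector p k] L => e v₀) hord
    simpa [LinearEquiv.pow_apply] using this
  -- the eigenvalue mod p
  set lam : k := c.coeff 0 with hlam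
  have hlamN : lam ^ (M0 + 1) = 1 := by
    have h1 : (c ^ (M0 + 1) - 1) • vbar = 0 := by
      have := hiter (M0 + 1)
      rw [hordv, hv₀] at this
      rw [sub_smul, one_smul, ← this, sub_self]
    have h2 : ¬ IsUnit (c ^ (M0 + 1) - 1) := by
      intro h
      obtain ⟨u, hu⟩ := h
      exact hvbar (unit_smul_cancel u vbar (by rw [hu]; exact h1))
    have h3 : (c ^ (M0 + 1) - 1).coeff 0 = 0 := by
      by_contra h
      exact h2 (WittVector.isUnit_of_coeff_zero_ne_zero _ h)
    have h5 : lam ^ (M0 + 1) - 1 = 0 := by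
      have h6 : WittVector.constantCoeff (c ^ (M0 + 1) - 1) = 0 := h3
      rw [map_sub, map_pow, map_one] at h6
      exact h6
    exact sub_eq_zero.mp h5
  have hlam0 : lam ≠ 0 := by
    intro h
    rw [h, zero_pow (Nat.succ_ne_zero M0)] at hlamN
    exact zero_ne_one hlamN
  -- the Teichmüller eigenvalue
  set μ : WittVector p k := WittVector.teichmuller p lam with hμ
  have hμN : μ ^ (M0 + 1) = 1 := by
    rw [hμ, ← map_pow, hlamN, map_one]
  have hμunit : IsUnit μ := IsUnit.of_mul_eq_one (μ ^ M0) (by rw [← pow_succ']; exact hμN)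
  have hμcoeff : μ.coeff 0 = lam := WittVector.teichmuller_coeff_zero p lam
  -- the eigenvector
  set v : L := ∑ i ∈ Finset.range (M0 + 1), μ ^ (M0 - i) • ψ^[i] v₀ with hv
  set a : ℕ → L := fun j => μ ^ (M0 + 1 - j) • ψ^[j] v₀ with ha
  have ha0 : a 0 = v₀ := by simp [ha, hμN]
  have haN : a (M0 + 1) = v₀ := by simp [ha, hordv]
  have hψv : ψ v = μ • v := by
    have lhs : ψ v = ∑ i ∈ Finset.range (M0 + 1), a (i + 1) := by
      rw [hv, map_sum]
      refine Finset.sum_congr rfl fun i _ => ?_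
      rw [map_smul]
      simp only [ha, Function.iterate_succ_apply', Nat.succ_sub_succ]
    have rhs : μ • v = ∑ i ∈ Finset.range (M0 + 1), a i := by
      rw [hv, Finset.smul_sum]
      refine Finset.sum_congr rfl fun i hi => ?_
      rw [Finset.mem_range, Nat.lt_succ_iff] at hi
      simp only [ha]
      rw [smul_smul, ← pow_succ']
      have he : M0 - i + 1 = M0 + 1 - i := by omega
      rw [he]
    rw [lhs, rhs, Finset.sum_range_succ, Finset.sum_range_succ', ha0, haN]
  -- reduction of v
  set s₀ : WittVector p k := ∑ i ∈ Finset.range (M0 + 1), μ ^ (M0 - i) * c ^ i with hs₀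
  have hmkv : pL.mkQ v = s₀ • vbar := by
    rw [hv, map_sum, hs₀, Finset.sum_smul]
    refine Finset.sum_congr rfl fun i _ => ?_
    rw [map_smul, hiter i, smul_smul]
  have hs₀unit : IsUnit s₀ := by
    apply WittVector.isUnit_of_coeff_zero_ne_zero
    have : WittVector.constantCoeff s₀ = (M0 + 1 : ℕ) * lam ^ M0 := by
      rw [hs₀, map_sum]
      have : ∀ i ∈ Finset.range (M0 + 1),
          WittVector.constantCoeff (μ ^ (M0 - i) * c ^ i) = lam ^ M0 := by
        intro i hi
        rw [Finset.mem_range, Nat.lt_succ_iff] at hi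
        rw [map_mul, map_pow, map_pow]
        show (μ.coeff 0) ^ (M0 - i) * (c.coeff 0) ^ i = lam ^ M0
        rw [hμcoeff, ← hlam, ← pow_add, Nat.sub_add_cancel hi]
      rw [Finset.sum_congr rfl this, Finset.sum_const, Finset.card_range, nsmul_eq_mul]
    show s₀.coeff 0 ≠ 0
    have hcast : ((M0 + 1 : ℕ) : k) ≠ 0 := by
      rw [Ne, CharP.cast_eq_zero_iff k p]
      exact hpN
    have : s₀.coeff 0 = (M0 + 1 : ℕ) * lam ^ M0 := this
    rw [this]
    exact mul_ne_zero hcast (pow_ne_zero _ hlam0)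
  obtain ⟨us₀, hus₀⟩ := hs₀unit
  have hmkv0 : pL.mkQ v ≠ 0 := by
    intro h
    apply hvbar
    rw [hmkv, ← hus₀] at h
    exact unit_smul_cancel us₀ vbar h
  have hvne : v ≠ 0 := by
    intro h; exact hmkv0 (by rw [h, map_zero])
  have hvnotpL : v ∉ pL := by
    intro h
    exact hmkv0 (by rw [Submodule.mkQ_apply, Submodule.Quotient.mk_eq_zero]; exact h)
  -- the submodule
  refine ⟨Submodule.span (WittVector p k) {v}, ?_, ?_, ?_, ?_, ?_⟩
  · exact Module.Free.of_equiv (LinearEquiv.toSpanNonzeroSingleton (WittVector p k) L v hvne)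
  · have h := (LinearEquiv.toSpanNonzeroSingleton (WittVector p k) L v hvne).lift_rank_eq
    rw [Module.rank_self, Cardinal.lift_one] at h
    simpa using h.symm
  · -- freeness of the quotient
    haveI : Module.Finite (WittVector p k) (L ⧸ Submodule.span (WittVector p k) {v}) :=
      Module.Finite.of_surjective
        (Submodule.span (WittVector p k) {v}).mkQ (Submodule.mkQ_surjective _)
    haveI : NoZeroSMulDivisors (WittVector p k) (L ⧸ Submodule.span (WittVector p k) {v}) := by
      refine ⟨fun {s x} hsx => ?_⟩
      rcases eq_or_ne s 0 with rfl | hs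
      · exact Or.inl rfl
      refine Or.inr ?_
      obtain ⟨y, rfl⟩ := Submodule.mkQ_surjective _ x
      have hmem : s • y ∈ Submodule.span (WittVector p k) {v} := by
        rw [← Submodule.Quotient.mk_eq_zero, ← Submodule.mkQ_apply, map_smul]
        exact hsx
      obtain ⟨b, hb⟩ := Submodule.mem_span_singleton.mp hmem
      rcases eq_or_ne b 0 with rfl | hbne
      · rw [zero_smul] at hb
        have : y = 0 := by
          rcases smul_eq_zero.mp hb.symm with h | h
          · exact absurd h hs
          · exact h
        rw [this, Submodule.mkQ_apply, Submodule.Quotient.mk_eq_zero]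
        exact Submodule.zero_mem _
      obtain ⟨m, u, hsu⟩ := WittVector.exists_eq_pow_p_mul' s hs
      obtain ⟨n, u', hbu⟩ := WittVector.exists_eq_pow_p_mul' b hbne
      rw [hsu, hbu] at hb
      rcases le_or_gt m n with hmn | hnm
      · -- y ∈ span v
        have key : (p : WittVector p k) ^ m • ((((p : WittVector p k) ^ (n - m) * ↑u') • v))
            = (p : WittVector p k) ^ m • ((↑u : WittVector p k) • y) := by
          rw [smul_smul, smul_smul, ← mul_assoc, ← pow_add, Nat.add_sub_cancel' hmn]
          exact hb
        have key2 := smul_right_injective L (pow_ne_zero m hp0) key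
        have hy : y = (↑u⁻¹ * ((p : WittVector p k) ^ (n - m) * ↑u')) • v := by
          rw [mul_smul, key2, smul_smul, Units.inv_mul, one_smul]
        rw [Submodule.mkQ_apply, Submodule.Quotient.mk_eq_zero, hy]
        exact Submodule.smul_mem _ _ (Submodule.mem_span_singleton_self v)
      · -- contradiction: v ∈ pL
        exfalso
        have key : (p : WittVector p k) ^ n • ((↑u' : WittVector p k) • v)
            = (p : WittVector p k) ^ n • (((p : WittVector p k) ^ (m - n) * ↑u) • y) := by
          rw [smul_smul, smul_smul, ← mul_assoc, ← pow_add, Nat.add_sub_cancel' hnm.le]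
          exact hb
        have key2 := smul_right_injective L (pow_ne_zero n hp0) key
        have hv' : v = (↑u'⁻¹ * ((p : WittVector p k) ^ (m - n) * ↑u)) • y := by
          rw [mul_smul, ← key2, smul_smul, Units.inv_mul, one_smul]
        apply hvnotpL
        rw [hv']
        apply hmem_pL
        exact Dvd.dvd.mul_left (Dvd.dvd.mul_right
          (dvd_pow_self _ (Nat.sub_ne_zero_of_lt hnm)) _) _
    exact Module.free_of_finite_type_torsion_free'
  · rw [Submodule.map_span, Set.image_singleton]
    show Submodule.span (WittVector p k) {ψ v} = _
    rw [hψv, Submodule.span_singleton_smul_eq hμunit]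
  · rw [Submodule.map_span, Set.image_singleton, hmkv, ← hus₀,
      Submodule.span_singleton_smul_eq us₀.isUnit, hℓ]
end

section
/- Let W be a complete discrete valuation ring with odd residue characteristic p, let L be a finite free W-module with a symmetric bilinear form B, and suppose there exist x, y ∈ L with B(x, y) a unit in W and B(x, x) ∈ pW. Then L contains a rank one W-submodule M, generated by an element of the form x + p a y for some a ∈ W, such that M is totally isotropic and M ⊗ k is the line spanned by the reduction of x. -/
private def phiQ {W : Type*} [CommRing W] (e c p d : W) (a : W) : W :=
  -e * (c + p * d * a ^ 2)

private lemma quad_root {W : Type*} [CommRing W] (p : W)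
    [IsAdicComplete (Ideal.span {p}) W] (c d u e : W) (he : e * (2 * u) = 1) :
    ∃ a : W, c + 2 * u * a + p * d * a ^ 2 = 0 := by
  have hI : ∀ n : ℕ, ((Ideal.span {p} : Ideal W) ^ n • ⊤ : Submodule W W)
      = (Ideal.span {p} : Ideal W) ^ n := fun n => by
    rw [smul_eq_mul, Ideal.mul_top]
  set φ : W → W := phiQ e c p d with hφ
  have step : ∀ (n : ℕ) (a b : W), a - b ∈ (Ideal.span {p} : Ideal W) ^ n →
      φ a - φ b ∈ (Ideal.span {p} : Ideal W) ^ (n + 1) := by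
    intro n a b h
    have hab : φ a - φ b = (-e * d * (a + b)) * (p * (a - b)) := by
      simp only [hφ, phiQ]; ring
    rw [hab]
    refine Ideal.mul_mem_left _ _ ?_
    rw [pow_succ']
    exact Ideal.mul_mem_mul (Ideal.mem_span_singleton_self p) h
  set f : ℕ → W := fun n => φ^[n] 0 with hf
  have hfs : ∀ n, f (n + 1) = φ (f n) := by
    intro n; simp only [hf, Function.iterate_succ_apply']
  have diff : ∀ n, f (n + 1) - f n ∈ (Ideal.span {p} : Ideal W) ^ n := by
    intro n
    induction n with
    | zero => simp
    | succ n ih =>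
      rw [hfs (n + 1)]
      rw [hfs n] at ih ⊢
      exact step n _ _ ih
  have cauchy : ∀ {m n : ℕ}, m ≤ n →
      f m ≡ f n [SMOD ((Ideal.span {p} : Ideal W) ^ m • ⊤ : Submodule W W)] := by
    intro m n h
    rw [SModEq.sub_mem, hI]
    induction n, h using Nat.le_induction with
    | base => simp
    | succ n hmn ih =>
      have : f m - f (n + 1) = (f m - f n) - (f (n + 1) - f n) := by ring
      rw [this]
      exact sub_mem ih (Ideal.pow_le_pow_right hmn (diff n))
  obtain ⟨a, ha⟩ := IsPrecomplete.prec (IsAdicComplete.toIsPrecomplete (I := Ideal.span {p}))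
    (fun {m n} h => cauchy h)
  have hmem : ∀ n, f n - a ∈ (Ideal.span {p} : Ideal W) ^ n := by
    intro n
    have := ha n
    rwa [SModEq.sub_mem, hI] at this
  have hfix : a = φ a := by
    have key : ∀ n, a - φ a ∈ (Ideal.span {p} : Ideal W) ^ n := by
      intro n
      have h1 : f (n + 1) - a ∈ (Ideal.span {p} : Ideal W) ^ (n + 1) := hmem (n + 1)
      have h2 : φ (f n) - φ a ∈ (Ideal.span {p} : Ideal W) ^ (n + 1) := step n _ _ (hmem n)
      have h3 : a - φ a = -(f (n + 1) - a) + (φ (f n) - φ a) := by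
        rw [hfs n]; ring
      rw [h3]
      exact Ideal.pow_le_pow_right (Nat.le_succ n) (add_mem (neg_mem h1) h2)
    have := IsHausdorff.haus (IsAdicComplete.toIsHausdorff (I := Ideal.span {p})) (a - φ a)
      (fun n => by rw [SModEq.zero, hI]; exact key n)
    exact (sub_eq_zero.mp this)
  refine ⟨a, ?_⟩
  have ha' : a = -e * (c + p * d * a ^ 2) := by
    conv_lhs => rw [hfix]
    simp only [hφ, phiQ]
  linear_combination 2 * u * ha' - (c + p * d * a ^ 2) * he

/-- Let `W` be a complete DVR with maximal ideal `(p)`, `p` of odd residue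
characteristic (`2` a unit), `L` a finite free `W`-module with a symmetric bilinear
form `B`, and `x, y ∈ L` with `B x y` a unit and `B x x ∈ pW`.  Then there are
`a ∈ W` and a rank one submodule `M`, generated by `x + p a y`, which is totally
isotropic and whose reduction mod `p` is the line spanned by the reduction of `x`. -/
theorem stmt12 (W : Type*) [CommRing W] [IsDomain W] [IsDiscreteValuationRing W]
    (p : W) (hp : IsLocalRing.maximalIdeal W = Ideal.span {p})
    [IsAdicComplete (Ideal.span {p}) W] (h2 : IsUnit (2 : W))
    (L : Type*) [AddCommGroup L] [Module W L] [Module.Finite W L] [Module.Free W L]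
    (B : L →ₗ[W] L →ₗ[W] W) (hsymm : ∀ u v : L, B u v = B v u)
    (x y : L) (hxy : IsUnit (B x y)) (hxx : B x x ∈ Ideal.span {p})
    (pL : Submodule W L) (hpL : pL = (Ideal.span {p}) • (⊤ : Submodule W L)) :
    ∃ (a : W) (M : Submodule W L),
      M = Submodule.span W {x + (p * a) • y} ∧
      Module.rank W M = 1 ∧
      (∀ u ∈ M, ∀ v ∈ M, B u v = 0) ∧
      Submodule.map pL.mkQ M = Submodule.span W {pL.mkQ x} := by
  obtain ⟨c, hc⟩ := Ideal.mem_span_singleton.mp hxx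
  obtain ⟨e, he⟩ := (h2.mul hxy).exists_left_inv
  obtain ⟨a, ha⟩ := quad_root p c (B y y) (B x y) e he
  set z := x + (p * a) • y with hz
  have hBzz : B z z = 0 := by
    have expand : B z z = B x x + (p * a) * (B x y) + (p * a) * (B y x)
        + (p * a) * ((p * a) * (B y y)) := by
      simp only [hz, map_add, LinearMap.add_apply, map_smul, LinearMap.smul_apply,
        smul_eq_mul]
      ring
    rw [expand, hc, hsymm y x]
    linear_combination p * ha
  have hBzy : B z y = B x y + (p * a) * (B y y) := by
    simp only [hz, map_add, LinearMap.add_apply, map_smul, LinearMap.smul_apply,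
      smul_eq_mul]
  have hBzyUnit : IsUnit (B z y) := by
    rw [hBzy]
    by_contra h
    have hmem : B x y + p * a * B y y ∈ IsLocalRing.maximalIdeal W := h
    have hpmem : p * a * B y y ∈ IsLocalRing.maximalIdeal W := by
      rw [hp]
      exact Ideal.mul_mem_right _ _ (Ideal.mul_mem_right _ _ (Ideal.mem_span_singleton_self p))
    have : B x y ∈ IsLocalRing.maximalIdeal W := by
      have := sub_mem hmem hpmem
      simpa using this
    exact IsLocalRing.maximalIdeal.isMaximal W |>.ne_top
      (Ideal.eq_top_of_isUnit_mem _ this hxy)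
  have hzne : z ≠ 0 := by
    intro h
    rw [h] at hBzyUnit
    simp only [map_zero, LinearMap.zero_apply] at hBzyUnit
    exact not_isUnit_zero hBzyUnit
  refine ⟨a, Submodule.span W {z}, rfl, ?_, ?_, ?_⟩
  · -- rank one
    have hinj : Function.Injective (LinearMap.toSpanSingleton W L z) := by
      rw [injective_iff_map_eq_zero]
      intro r hr
      have : B ((LinearMap.toSpanSingleton W L z) r) y = 0 := by rw [hr]; simp
      simp only [LinearMap.toSpanSingleton_apply, map_smul, LinearMap.smul_apply,
        smul_eq_mul] at this
      rcases mul_eq_zero.mp this with h | h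
      · exact h
      · exact absurd h hBzyUnit.ne_zero
    have h2 := lift_rank_range_of_injective (LinearMap.toSpanSingleton W L z) hinj
    rw [Module.rank_self, Cardinal.lift_one] at h2
    rw [show Submodule.span W {z} = LinearMap.range (LinearMap.toSpanSingleton W L z) from
      LinearMap.span_singleton_eq_range W L z]
    exact Cardinal.lift_eq_one.mp h2
  · -- totally isotropic
    intro u hu v hv
    obtain ⟨r, rfl⟩ := Submodule.mem_span_singleton.mp hu
    obtain ⟨s, rfl⟩ := Submodule.mem_span_singleton.mp hv
    simp [hBzz]
  · -- reduction mod p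
    rw [Submodule.map_span, Set.image_singleton]
    have : pL.mkQ z = pL.mkQ x := by
      rw [Submodule.mkQ_apply, Submodule.mkQ_apply, Submodule.Quotient.eq]
      have : z - x = (p * a) • y := by rw [hz]; abel
      rw [this, hpL]
      exact Submodule.smul_mem_smul
        (Ideal.mem_span_singleton.mpr (dvd_mul_right p a)) trivial
    rw [this]
end
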